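/- Let p ≥ 5 be a prime and n a positive integer. Let A' ⊆ 𝔽_p^n be such that every cycle (x_1, …, x_p) ∈ A' × ⋯ × A' has at most k distinct entries. Let B_1, …, B_k be a partition of {1, …, p} into k blocks such that the indices 1 and 2 lie in the same block. Let X_1, …, X_p ⊆ A' be sets such that X_i and X_j are disjoint whenever i and j lie in different blocks. Then every cycle (x_1, …, x_p) ∈ X_1 × ⋯ × X_p satisfies x_1 = x_2. -/
import Mathlib


/-- Let `p ≥ 5` be prime and `n ≥ 1`. Let `A' ⊆ 𝔽_p^n` be such that every cycle (p-tuple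
summing to zero) `(x_1, …, x_p) ∈ A' × ⋯ × A'` has at most `k` distinct entries. Let
`B : Fin p → Fin k` describe a partition of `{1, …, p}` into `k` blocks (indices `i, j` lie
in the same block iff `B i = B j`) with indices `1` and `2` in the same block, and let
`X_1, …, X_p ⊆ A'` be such that `X_i` and `X_j` are disjoint whenever `i` and `j` lie in
different blocks. Then every cycle `(x_1, …, x_p) ∈ X_1 × ⋯ × X_p` satisfies `x_1 = x_2`. -/
theorem stmt14 {p n k : ℕ} (hp : p.Prime) (hp5 : 5 ≤ p) (hn : 0 < n)
    (A' : Set (Fin n → ZMod p))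
    (hA' : ∀ x : Fin p → (Fin n → ZMod p), (∀ i, x i ∈ A') → ∑ i, x i = 0 →
      (Finset.image x Finset.univ).card ≤ k)
    (B : Fin p → Fin k) (hB : Function.Surjective B)
    (h12 : B ⟨0, by omega⟩ = B ⟨1, by omega⟩)
    (X : Fin p → Set (Fin n → ZMod p)) (hXA : ∀ i, X i ⊆ A')
    (hXdisj : ∀ i j, B i ≠ B j → Disjoint (X i) (X j)) :
    ∀ x : Fin p → (Fin n → ZMod p), (∀ i, x i ∈ X i) → ∑ i, x i = 0 →
      x ⟨0, by omega⟩ = x ⟨1, by omega⟩ := by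
  intro x hx hsum
  have hxA : ∀ i, x i ∈ A' := fun i => hXA i (hx i)
  have hkey : ∀ i j : Fin p, x i = x j → B i = B j := by
    intro i j hij
    by_contra hne
    exact Set.disjoint_left.mp (hXdisj i j hne) (hx i) (hij ▸ hx j)
  have hcard : (Finset.image x Finset.univ).card ≤ k := hA' x hxA hsum
  have hmem : ∀ i, x i ∈ Finset.image x Finset.univ :=
    fun i => Finset.mem_image_of_mem x (Finset.mem_univ i)
  let φ : {v // v ∈ Finset.image x Finset.univ} → Fin k :=
    fun v => B (Finset.mem_image.mp v.2).choose
  have hφ : ∀ (i : Fin p), φ ⟨x i, hmem i⟩ = B i := by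
    intro i
    apply hkey
    exact (Finset.mem_image.mp (hmem i)).choose_spec.2
  have hsurj : Function.Surjective φ := by
    intro b
    obtain ⟨i, hi⟩ := hB b
    exact ⟨⟨x i, hmem i⟩, by rw [hφ i, hi]⟩
  have hcard2 : Fintype.card (Fin k) ≤ Fintype.card {v // v ∈ Finset.image x Finset.univ} :=
    Fintype.card_le_of_surjective φ hsurj
  have hceq : Fintype.card {v // v ∈ Finset.image x Finset.univ} = Fintype.card (Fin k) := by
    simp only [Fintype.card_coe, Fintype.card_fin] at hcard2 ⊢
    omega
  have hinj : Function.Injective φ :=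
    ((Fintype.bijective_iff_surjective_and_card φ).mpr ⟨hsurj, hceq⟩).1
  have heq := hinj (a₁ := ⟨x ⟨0, by omega⟩, hmem _⟩) (a₂ := ⟨x ⟨1, by omega⟩, hmem _⟩)
    (by rw [hφ, hφ, h12])
  exact congrArg Subtype.val heq
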